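/- There exists a finite set S ⊂ ℂ containing 0 such that for every λ ∉ S and every (a,b,c,p) ∈ ℂ⁴ with c ≠ 0 satisfying λp² = −2a, λ²b = 4ac, 12ca³ = (2c³+1)λ, and 64c⁶ − (16λ⁶ − 32)c³ + λ⁶ = 0, the orbit of the plane W(a,b,c,p) under the coordinate-permutation action of H on subspaces of ℂ⁶ has exactly 18 elements; equivalently, the stabilizer of W(a,b,c,p) in H is the two-element subgroup generated by the permutation swapping x₀ ↔ x₁ and x₃ ↔ x₄. -/

import Mathlib

noncomputable section

/-- The first cubic form defining the (3,3) pencil `X_λ`. -/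
def Fcubic (l : ℂ) (x : Fin 6 → ℂ) : ℂ :=
  x 0 ^ 3 + x 1 ^ 3 + x 2 ^ 3 - 3 * l * x 3 * x 4 * x 5

/-- The second cubic form defining the (3,3) pencil `X_λ`. -/
def Gcubic (l : ℂ) (x : Fin 6 → ℂ) : ℂ :=
  x 3 ^ 3 + x 4 ^ 3 + x 5 ^ 3 - 3 * l * x 0 * x 1 * x 2

/-- The plane `W(a,b,c,p) ⊆ ℂ⁶`, spanned by `(1,−1,0,p,−p,0)` and `(a,a,b,c,c,1)`. -/
def linePlane (a b c p : ℂ) : Submodule ℂ (Fin 6 → ℂ) :=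
  Submodule.span ℂ {![1, -1, 0, p, -p, 0], ![a, a, b, c, c, 1]}

/-- The system of equations characterizing the 36 lines of Lemma 2.3. -/
def lineEqs (l a b c p : ℂ) : Prop :=
  l * p ^ 2 = -2 * a ∧ l ^ 2 * b = 4 * a * c ∧
    12 * c * a ^ 3 = (2 * c ^ 3 + 1) * l ∧
    64 * c ^ 6 - (16 * l ^ 6 - 32) * c ^ 3 + l ^ 6 = 0

/-- The subgroup `G ≤ (ℂˣ)⁶` generated by `α₁, α₂, α₃`, where `ω = ζ³`. -/
def Gsub (z : ℂˣ) : Subgroup (Fin 6 → ℂˣ) :=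
  Subgroup.closure
    {![1, z ^ 3, (z ^ 3)⁻¹, 1, 1, 1],
      ![1, 1, z ^ 3, z, z, (z ^ 2)⁻¹],
      ![1, 1, 1, 1, z ^ 3, (z ^ 3)⁻¹]}

/-- The subgroup `H ≤ S₆` generated by all permutations of the indices `{0,1,2}`
and all permutations of the indices `{3,4,5}`. -/
def Hsub : Subgroup (Equiv.Perm (Fin 6)) :=
  Subgroup.closure
    ({σ : Equiv.Perm (Fin 6) | ∀ i : Fin 6, 3 ≤ (i : ℕ) → σ i = i} ∪
      {σ : Equiv.Perm (Fin 6) | ∀ i : Fin 6, (i : ℕ) < 3 → σ i = i})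

/-- Componentwise multiplication by `g ∈ (ℂˣ)⁶` as a linear automorphism-inducing map. -/
def diagMap (g : Fin 6 → ℂˣ) : (Fin 6 → ℂ) →ₗ[ℂ] (Fin 6 → ℂ) :=
  LinearMap.pi fun i => (g i : ℂ) • LinearMap.proj i

/-- Coordinate permutation `x ↦ x ∘ σ` as a linear map. -/
def permMap (σ : Equiv.Perm (Fin 6)) : (Fin 6 → ℂ) →ₗ[ℂ] (Fin 6 → ℂ) :=
  LinearMap.funLeft ℂ ℂ σ

def Pprop (σ : Equiv.Perm (Fin 6)) : Prop := ∀ i : Fin 6, (i : ℕ) < 3 ↔ ((σ i : ℕ) < 3)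

instance : DecidablePred Pprop := fun σ => by unfold Pprop; infer_instance

lemma fin6 : ∀ j : Fin 6, j = 0 ∨ j = 1 ∨ j = 2 ∨ j = 3 ∨ j = 4 ∨ j = 5 := by decide

lemma Pprop.mul {σ τ : Equiv.Perm (Fin 6)} (hσ : Pprop σ) (hτ : Pprop τ) : Pprop (σ * τ) :=
  fun i => (hτ i).trans (hσ (τ i))

lemma Pprop.inv {σ : Equiv.Perm (Fin 6)} (hσ : Pprop σ) : Pprop σ⁻¹ := fun i => by
  have := hσ (σ⁻¹ i)
  rw [show σ (σ⁻¹ i) = i from σ.apply_symm_apply i] at this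
  exact this.symm

def Ksub : Subgroup (Equiv.Perm (Fin 6)) where
  carrier := {σ | Pprop σ}
  one_mem' := fun i => by simp
  mul_mem' := fun ha hb => Pprop.mul ha hb
  inv_mem' := fun h => Pprop.inv h

lemma mem_left (σ : Equiv.Perm (Fin 6)) (h : ∀ i : Fin 6, 3 ≤ (i : ℕ) → σ i = i) : σ ∈ Hsub :=
  Subgroup.subset_closure (Set.mem_union_left _ h)

lemma mem_right (σ : Equiv.Perm (Fin 6)) (h : ∀ i : Fin 6, (i : ℕ) < 3 → σ i = i) : σ ∈ Hsub :=
  Subgroup.subset_closure (Set.mem_union_right _ h)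

lemma hsub_pprop {σ : Equiv.Perm (Fin 6)} (h : σ ∈ Hsub) : Pprop σ := by
  have hle : Hsub ≤ Ksub := by
    apply (Subgroup.closure_le Ksub).mpr
    rintro σ (h | h)
    · intro i
      constructor
      · intro hi
        by_contra hge
        have h2 : σ (σ i) = σ i := h (σ i) (by omega)
        have h3 := σ.injective h2
        rw [h3] at hge
        omega
      · intro hi
        by_contra hge
        have h2 := h i (by omega)
        rw [h2] at hi
        omega
    · intro i
      constructor
      · intro hi
        rw [h i hi]
        exact hi
      · intro hi
        by_contra hge
        have h2 : σ (σ i) = σ i := h (σ i) hi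
        have h3 := σ.injective h2
        rw [h3] at hi
        omega
  exact hle h

lemma pprop_mem {σ : Equiv.Perm (Fin 6)} (h : Pprop σ) : σ ∈ Hsub := by
  have hinv := Pprop.inv h
  let f : Fin 6 → Fin 6 := fun i => if (i : ℕ) < 3 then σ i else i
  let g : Fin 6 → Fin 6 := fun i => if (i : ℕ) < 3 then σ⁻¹ i else i
  have hfg : ∀ i, g (f i) = i := by
    intro i; by_cases hi : (i : ℕ) < 3
    · have h2 : ((σ i : ℕ)) < 3 := (h i).mp hi
      simp only [f, g, if_pos hi, if_pos h2, (show ∀ x, σ⁻¹ (σ x) = x from σ.symm_apply_apply)]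
    · simp only [f, g, if_neg hi]
  have hgf : ∀ i, f (g i) = i := by
    intro i; by_cases hi : (i : ℕ) < 3
    · have h2 : ((σ⁻¹ i : ℕ)) < 3 := (hinv i).mp hi
      simp only [f, g, if_pos hi, if_pos h2, (show ∀ x, σ (σ⁻¹ x) = x from σ.apply_symm_apply)]
    · simp only [f, g, if_neg hi]
  let σ₁ : Equiv.Perm (Fin 6) := ⟨f, g, hfg, hgf⟩
  have h1 : σ₁ ∈ Hsub := mem_left σ₁ (fun i hi => by
    show f i = i
    simp only [f, if_neg (by omega : ¬ (i : ℕ) < 3)])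
  have h2 : σ₁⁻¹ * σ ∈ Hsub := mem_right _ (fun i hi => by
    have h3 : ((σ i : ℕ)) < 3 := (h i).mp hi
    show σ₁⁻¹ (σ i) = i
    show g (σ i) = i
    simp only [g, if_pos h3, (show ∀ x, σ⁻¹ (σ x) = x from σ.symm_apply_apply)])
  have heq : σ = σ₁ * (σ₁⁻¹ * σ) := by group
  rw [heq]
  exact mul_mem h1 h2

lemma stab_iff {l a b c p : ℂ} (hl0 : l ≠ 0) (hl6 : l ^ 6 ≠ 1) (hc : c ≠ 0)
    (he : lineEqs l a b c p) {σ : Equiv.Perm (Fin 6)} (hσ : Pprop σ) :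
    Submodule.map (permMap σ) (linePlane a b c p) = linePlane a b c p ↔
      σ = 1 ∨ σ = Equiv.swap (0 : Fin 6) 1 * Equiv.swap (3 : Fin 6) 4 := by
  obtain ⟨e1, e2, e3, e4⟩ := he
  have ha : a ≠ 0 := by
    intro h
    rw [h] at e3
    have h1 : (2 * c ^ 3 + 1) * l = 0 := by linear_combination -e3
    rcases mul_eq_zero.mp h1 with h2 | h2
    · have hc3 : c ^ 3 = -(1/2 : ℂ) := by linear_combination h2 / 2
      have h9 : (9 : ℂ) * l ^ 6 = 0 := by
        linear_combination e4 - (64 * c ^ 3 - 16 * l ^ 6) * hc3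
      have h0 : l ^ 6 = 0 := by linear_combination h9 / 9
      exact hl0 ((pow_eq_zero_iff (by norm_num : (6:ℕ) ≠ 0)).mp h0)
    · exact hl0 h2
  have hp : p ≠ 0 := by
    intro h
    rw [h] at e1
    exact ha (by linear_combination e1 / 2)
  have hcne : 2 * c + 1 ≠ 0 := by
    intro h
    have hcv : c = -(1/2 : ℂ) := by linear_combination h / 2
    have hc3 : c ^ 3 = -(1/8 : ℂ) := by rw [hcv]; norm_num
    have h3 : (3 : ℂ) * l ^ 6 - 3 = 0 := by
      linear_combination e4 - (64 * c ^ 3 - 16 * l ^ 6 + 24) * hc3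
    exact hl6 (by linear_combination h3 / 3)
  have hhigh : ∀ i : Fin 6, ¬ ((i : ℕ) < 3) → σ i = 3 ∨ σ i = 4 ∨ σ i = 5 := by
    intro i hi
    have h1 : ¬ ((σ i : ℕ) < 3) := fun hh => hi ((hσ i).mpr hh)
    rcases fin6 (σ i) with h | h | h | h | h | h <;>
      first
        | (exfalso; rw [h] at h1; exact h1 (by decide))
        | tauto
  have hlow : ∀ i : Fin 6, (i : ℕ) < 3 → σ i = 0 ∨ σ i = 1 ∨ σ i = 2 := by
    intro i hi
    have h1 : (σ i : ℕ) < 3 := (hσ i).mp hi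
    rcases fin6 (σ i) with h | h | h | h | h | h <;>
      first
        | tauto
        | (exfalso; rw [h] at h1; exact absurd h1 (by decide))
  constructor
  · intro hmap
    have humem : (![1, -1, 0, p, -p, 0] : Fin 6 → ℂ) ∈ linePlane a b c p :=
      Submodule.subset_span (Set.mem_insert _ _)
    have him : permMap σ (![1, -1, 0, p, -p, 0]) ∈ linePlane a b c p := by
      rw [← hmap]; exact Submodule.mem_map_of_mem humem
    rw [linePlane, Submodule.mem_span_pair] at him
    obtain ⟨α, β, hw⟩ := him
    have key : ∀ i : Fin 6, α * (![(1:ℂ), -1, 0, p, -p, 0]) i + β * (![a, a, b, c, c, 1]) i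
        = (![(1:ℂ), -1, 0, p, -p, 0]) (σ i) := by
      intro i
      have h := congrFun hw i
      simp only [Pi.add_apply, Pi.smul_apply, smul_eq_mul, permMap,
        LinearMap.funLeft_apply, Function.comp_apply] at h
      exact h
    have hfromc : ∀ β₀ : ℂ, β₀ ≠ 0 → 2 * β₀ * c = -β₀ → False := by
      intro β₀ hb0 hh
      apply hcne
      have h1 : β₀ * (2 * c + 1) = 0 := by linear_combination hh
      rcases mul_eq_zero.mp h1 with h | h
      · exact absurd h hb0
      · exact h
    have ue3 : (![(1:ℂ), -1, 0, p, -p, 0]) 3 = p := rfl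
    have ue4 : (![(1:ℂ), -1, 0, p, -p, 0]) 4 = -p := rfl
    have ue5 : (![(1:ℂ), -1, 0, p, -p, 0]) 5 = 0 := rfl
    have ve3 : (![a, a, b, c, c, 1] : Fin 6 → ℂ) 3 = c := rfl
    have ve4 : (![a, a, b, c, c, 1] : Fin 6 → ℂ) 4 = c := rfl
    have h5 := key 5
    rw [show (![(1:ℂ), -1, 0, p, -p, 0]) 5 = 0 from rfl,
      show (![a, a, b, c, c, 1] : Fin 6 → ℂ) 5 = 1 from rfl] at h5
    rcases hhigh 5 (by decide) with h5v | h5v | h5v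
    · -- σ 5 = 3, β = p
      rw [h5v] at h5; norm_num [Matrix.cons_val_zero, Matrix.cons_val_one, Matrix.cons_val_two, Matrix.cons_val_three, Matrix.cons_val_four] at h5
      have h3 := key 3; have h4 := key 4
      rcases hhigh 3 (by decide) with h3v | h3v | h3v
      · exact absurd (σ.injective (h3v.trans h5v.symm)) (by decide)
      · rcases hhigh 4 (by decide) with h4v | h4v | h4v
        · exact absurd (σ.injective (h4v.trans h5v.symm)) (by decide)
        · exact absurd (σ.injective (h4v.trans h3v.symm)) (by decide)
        · rw [ue3, ve3, h3v, ue4] at h3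
          rw [ue4, ve4, h4v, ue5] at h4
          exact (hfromc β (by rw [h5]; simpa using hp) (by linear_combination h3 + h4 + h5)).elim
      · rcases hhigh 4 (by decide) with h4v | h4v | h4v
        · exact absurd (σ.injective (h4v.trans h5v.symm)) (by decide)
        · rw [ue3, ve3, h3v, ue5] at h3
          rw [ue4, ve4, h4v, ue4] at h4
          exact (hfromc β (by rw [h5]; simpa using hp) (by linear_combination h3 + h4 + h5)).elim
        · exact absurd (σ.injective (h4v.trans h3v.symm)) (by decide)
    · -- σ 5 = 4, β = -p
      rw [h5v] at h5; norm_num [Matrix.cons_val_zero, Matrix.cons_val_one, Matrix.cons_val_two, Matrix.cons_val_three, Matrix.cons_val_four] at h5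
      have h3 := key 3; have h4 := key 4
      rcases hhigh 3 (by decide) with h3v | h3v | h3v
      · rcases hhigh 4 (by decide) with h4v | h4v | h4v
        · exact absurd (σ.injective (h4v.trans h3v.symm)) (by decide)
        · exact absurd (σ.injective (h4v.trans h5v.symm)) (by decide)
        · rw [ue3, ve3, h3v, ue3] at h3
          rw [ue4, ve4, h4v, ue5] at h4
          exact (hfromc β (by rw [h5]; simpa using hp) (by linear_combination h3 + h4 + h5)).elim
      · exact absurd (σ.injective (h3v.trans h5v.symm)) (by decide)
      · rcases hhigh 4 (by decide) with h4v | h4v | h4v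
        · rw [ue3, ve3, h3v, ue5] at h3
          rw [ue4, ve4, h4v, ue3] at h4
          exact (hfromc β (by rw [h5]; simpa using hp) (by linear_combination h3 + h4 + h5)).elim
        · exact absurd (σ.injective (h4v.trans h5v.symm)) (by decide)
        · exact absurd (σ.injective (h4v.trans h3v.symm)) (by decide)
    · -- σ 5 = 5, β = 0
      rw [h5v] at h5
      rw [show (![(1:ℂ), -1, 0, p, -p, 0]) 5 = 0 from rfl] at h5
      norm_num at h5
      subst h5
      have h2 := key 2
      rcases hlow 2 (by decide) with h2v | h2v | h2v
      · rw [h2v] at h2; norm_num [Matrix.cons_val_zero, Matrix.cons_val_one, Matrix.cons_val_two, Matrix.cons_val_three, Matrix.cons_val_four] at h2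
      · rw [h2v] at h2; norm_num [Matrix.cons_val_zero, Matrix.cons_val_one, Matrix.cons_val_two, Matrix.cons_val_three, Matrix.cons_val_four] at h2
      · -- σ 2 = 2
        have h0 := key 0
        rcases hlow 0 (by decide) with h0v | h0v | h0v
        · -- σ 0 = 0, α = 1
          rw [h0v] at h0; norm_num at h0
          subst h0
          have h1 := key 1
          rcases hlow 1 (by decide) with h1v | h1v | h1v
          · exact absurd (σ.injective (h1v.trans h0v.symm)) (by decide)
          · -- σ 1 = 1
            have h3 := key 3
            rcases hhigh 3 (by decide) with h3v | h3v | h3v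
            · -- σ 3 = 3
              have h4 := key 4
              rcases hhigh 4 (by decide) with h4v | h4v | h4v
              · exact absurd (σ.injective (h4v.trans h3v.symm)) (by decide)
              · -- σ 4 = 4 : σ = 1
                left
                apply Equiv.ext
                intro i
                rcases fin6 i with rfl | rfl | rfl | rfl | rfl | rfl
                · rw [h0v]; rfl
                · rw [h1v]; rfl
                · rw [h2v]; rfl
                · rw [h3v]; rfl
                · rw [h4v]; rfl
                · rw [h5v]; rfl
              · exact absurd (σ.injective (h4v.trans h5v.symm)) (by decide)
            · -- σ 3 = 4 : p = -p
              rw [h3v] at h3; norm_num [Matrix.cons_val_zero, Matrix.cons_val_one, Matrix.cons_val_two, Matrix.cons_val_three, Matrix.cons_val_four] at h3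
              exact absurd (by linear_combination h3 / 2 : p = 0) hp
            · -- σ 3 = 5 : p = 0
              rw [h3v] at h3
              rw [show (![(1:ℂ), -1, 0, p, -p, 0]) 5 = 0 from rfl] at h3
              norm_num at h3
              exact absurd h3 hp
          · exact absurd (σ.injective (h1v.trans h2v.symm)) (by decide)
        · -- σ 0 = 1, α = -1
          rw [h0v] at h0; norm_num at h0
          subst h0
          have h1 := key 1
          rcases hlow 1 (by decide) with h1v | h1v | h1v
          · -- σ 1 = 0
            have h3 := key 3
            rcases hhigh 3 (by decide) with h3v | h3v | h3v
            · -- σ 3 = 3 : -p = p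
              rw [h3v] at h3; norm_num [Matrix.cons_val_zero, Matrix.cons_val_one, Matrix.cons_val_two, Matrix.cons_val_three, Matrix.cons_val_four] at h3
              exact absurd (by linear_combination -h3 / 2 : p = 0) hp
            · -- σ 3 = 4
              have h4 := key 4
              rcases hhigh 4 (by decide) with h4v | h4v | h4v
              · -- σ 4 = 3 : σ = swap * swap
                right
                apply Equiv.ext
                intro i
                rcases fin6 i with rfl | rfl | rfl | rfl | rfl | rfl
                · rw [h0v]; decide
                · rw [h1v]; decide
                · rw [h2v]; decide
                · rw [h3v]; decide
                · rw [h4v]; decide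
                · rw [h5v]; decide
              · exact absurd (σ.injective (h4v.trans h3v.symm)) (by decide)
              · exact absurd (σ.injective (h4v.trans h5v.symm)) (by decide)
            · -- σ 3 = 5 : -p = 0
              rw [h3v] at h3
              rw [show (![(1:ℂ), -1, 0, p, -p, 0]) 5 = 0 from rfl] at h3
              norm_num at h3
              exact absurd h3 hp
          · exact absurd (σ.injective (h1v.trans h0v.symm)) (by decide)
          · exact absurd (σ.injective (h1v.trans h2v.symm)) (by decide)
        · exact absurd (σ.injective (h0v.trans h2v.symm)) (by decide)
  · rintro (rfl | rfl)
    · have h1 : permMap (1 : Equiv.Perm (Fin 6)) = LinearMap.id := rfl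
      rw [h1, Submodule.map_id]
    · have e0 : (Equiv.swap (0:Fin 6) 1 * Equiv.swap (3:Fin 6) 4) 0 = 1 := by decide
      have e1 : (Equiv.swap (0:Fin 6) 1 * Equiv.swap (3:Fin 6) 4) 1 = 0 := by decide
      have e2 : (Equiv.swap (0:Fin 6) 1 * Equiv.swap (3:Fin 6) 4) 2 = 2 := by decide
      have e3' : (Equiv.swap (0:Fin 6) 1 * Equiv.swap (3:Fin 6) 4) 3 = 4 := by decide
      have e4' : (Equiv.swap (0:Fin 6) 1 * Equiv.swap (3:Fin 6) 4) 4 = 3 := by decide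
      have e5 : (Equiv.swap (0:Fin 6) 1 * Equiv.swap (3:Fin 6) 4) 5 = 5 := by decide
      have hss : ∀ i, (Equiv.swap (0:Fin 6) 1 * Equiv.swap (3:Fin 6) 4)
          ((Equiv.swap (0:Fin 6) 1 * Equiv.swap (3:Fin 6) 4) i) = i := by decide
      have hu : permMap (Equiv.swap (0:Fin 6) 1 * Equiv.swap (3:Fin 6) 4) (![1, -1, 0, p, -p, 0])
          = (-1 : ℂ) • ![1, -1, 0, p, -p, 0] := by
        funext i
        show (![1, -1, 0, p, -p, 0] : Fin 6 → ℂ)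
          ((Equiv.swap (0:Fin 6) 1 * Equiv.swap (3:Fin 6) 4) i) = ((-1 : ℂ) • ![1, -1, 0, p, -p, 0]) i
        rcases fin6 i with rfl | rfl | rfl | rfl | rfl | rfl
        · rw [e0]; norm_num
        · rw [e1]; norm_num
        · rw [e2]; norm_num [Matrix.cons_val_zero, Matrix.cons_val_one, Matrix.cons_val_two, Matrix.cons_val_three, Matrix.cons_val_four]
        · rw [e3']; norm_num [Matrix.cons_val_zero, Matrix.cons_val_one, Matrix.cons_val_two, Matrix.cons_val_three, Matrix.cons_val_four]
        · rw [e4']; norm_num [Matrix.cons_val_zero, Matrix.cons_val_one, Matrix.cons_val_two, Matrix.cons_val_three, Matrix.cons_val_four]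
        · rw [e5]
          rw [show (![(1:ℂ), -1, 0, p, -p, 0]) 5 = 0 from rfl]
          norm_num
          rw [show (![(1:ℂ), -1, 0, p, -p, 0]) 5 = 0 from rfl]
      have hv : permMap (Equiv.swap (0:Fin 6) 1 * Equiv.swap (3:Fin 6) 4) (![a, a, b, c, c, 1])
          = ![a, a, b, c, c, 1] := by
        funext i
        show (![a, a, b, c, c, 1] : Fin 6 → ℂ)
          ((Equiv.swap (0:Fin 6) 1 * Equiv.swap (3:Fin 6) 4) i) = _
        rcases fin6 i with rfl | rfl | rfl | rfl | rfl | rfl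
        · rw [e0]; norm_num
        · rw [e1]; norm_num
        · rw [e2]
        · rw [e3']; norm_num [Matrix.cons_val_zero, Matrix.cons_val_one, Matrix.cons_val_two, Matrix.cons_val_three, Matrix.cons_val_four]
        · rw [e4']; norm_num [Matrix.cons_val_zero, Matrix.cons_val_one, Matrix.cons_val_two, Matrix.cons_val_three, Matrix.cons_val_four]
        · rw [e5]
      have hle : Submodule.map (permMap (Equiv.swap (0:Fin 6) 1 * Equiv.swap (3:Fin 6) 4))
          (linePlane a b c p) ≤ linePlane a b c p := by
        rw [linePlane, Submodule.map_le_iff_le_comap, Submodule.span_le]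
        rintro x hx
        simp only [Set.mem_insert_iff, Set.mem_singleton_iff] at hx
        rcases hx with rfl | rfl
        · refine SetLike.mem_coe.mpr (Submodule.mem_comap.mpr ?_)
          rw [hu]
          exact Submodule.smul_mem _ _ (Submodule.subset_span (Set.mem_insert _ _))
        · refine SetLike.mem_coe.mpr (Submodule.mem_comap.mpr ?_)
          rw [hv]
          exact Submodule.subset_span (Set.mem_insert_of_mem _ rfl)
      refine le_antisymm hle ?_
      intro y hy
      have h1 : permMap (Equiv.swap (0:Fin 6) 1 * Equiv.swap (3:Fin 6) 4) y ∈ linePlane a b c p :=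
        hle (Submodule.mem_map_of_mem hy)
      refine Submodule.mem_map.mpr ⟨_, h1, ?_⟩
      funext i
      show y ((Equiv.swap (0:Fin 6) 1 * Equiv.swap (3:Fin 6) 4)
        ((Equiv.swap (0:Fin 6) 1 * Equiv.swap (3:Fin 6) 4) i)) = y i
      rw [hss]


def Trep : Finset (Equiv.Perm (Fin 6)) :=
  Finset.univ.filter (fun σ => Pprop σ ∧ σ⁻¹ 0 < σ⁻¹ 1)

set_option maxRecDepth 10000 in
lemma Trep_card : Trep.card = 18 := by decide

lemma map_map_perm (σ τ : Equiv.Perm (Fin 6)) (W : Submodule ℂ (Fin 6 → ℂ)) :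
    Submodule.map (permMap τ) (Submodule.map (permMap σ) W)
      = Submodule.map (permMap (σ * τ)) W := by
  rw [← Submodule.map_comp]
  rfl

theorem stmt_6 :
    ∃ S : Finset ℂ, (0 : ℂ) ∈ S ∧ ∀ l : ℂ, l ∉ S →
      ∀ a b c p : ℂ, c ≠ 0 → lineEqs l a b c p →
        ({w : Submodule ℂ (Fin 6 → ℂ) |
            ∃ σ ∈ Hsub, Submodule.map (permMap σ) (linePlane a b c p) = w}.ncard = 18 ∧
          ∀ σ ∈ Hsub,
            (Submodule.map (permMap σ) (linePlane a b c p) = linePlane a b c p ↔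
              σ = 1 ∨ σ = Equiv.swap (0 : Fin 6) 1 * Equiv.swap (3 : Fin 6) 4)) := by
  refine ⟨insert (0 : ℂ) (Polynomial.nthRoots 6 (1 : ℂ)).toFinset,
    Finset.mem_insert_self _ _, ?_⟩
  intro l hl a b c p hc he
  have hl0 : l ≠ 0 := by rintro rfl; exact hl (Finset.mem_insert_self _ _)
  have hl6 : l ^ 6 ≠ 1 := by
    intro h
    exact hl (Finset.mem_insert_of_mem (Multiset.mem_toFinset.mpr
      ((Polynomial.mem_nthRoots (by norm_num)).mpr h)))
  have hstab : ∀ σ : Equiv.Perm (Fin 6), Pprop σ →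
      (Submodule.map (permMap σ) (linePlane a b c p) = linePlane a b c p ↔
        σ = 1 ∨ σ = Equiv.swap (0 : Fin 6) 1 * Equiv.swap (3 : Fin 6) 4) :=
    fun σ hσ => stab_iff hl0 hl6 hc he hσ
  constructor
  · have hsP : Pprop (Equiv.swap (0 : Fin 6) 1 * Equiv.swap (3 : Fin 6) 4) := by decide
    have hmaps : Submodule.map (permMap (Equiv.swap (0 : Fin 6) 1 * Equiv.swap (3 : Fin 6) 4))
        (linePlane a b c p) = linePlane a b c p := (hstab _ hsP).mpr (Or.inr rfl)
    have hinj : Set.InjOn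
        (fun σ : Equiv.Perm (Fin 6) => Submodule.map (permMap σ) (linePlane a b c p)) ↑Trep := by
      intro τ hτ τ' hτ' heq
      simp only [Finset.mem_coe, Trep, Finset.mem_filter, Finset.mem_univ, true_and] at hτ hτ'
      simp only at heq
      have h1 : Submodule.map (permMap (τ * τ'⁻¹)) (linePlane a b c p) = linePlane a b c p := by
        rw [← map_map_perm, heq, map_map_perm, mul_inv_cancel]
        have h2 : permMap (1 : Equiv.Perm (Fin 6)) = LinearMap.id := rfl
        rw [h2, Submodule.map_id]
      rcases (hstab _ (Pprop.mul hτ.1 (Pprop.inv hτ'.1))).mp h1 with h | h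
      · exact mul_inv_eq_one.mp h
      · exfalso
        have hττ' : τ = (Equiv.swap (0 : Fin 6) 1 * Equiv.swap (3 : Fin 6) 4) * τ' := by
          rw [← h]; group
        have k0 : τ⁻¹ 0 = τ'⁻¹ 1 := by
          rw [hττ', mul_inv_rev]
          show τ'⁻¹ ((Equiv.swap (0 : Fin 6) 1 * Equiv.swap (3 : Fin 6) 4)⁻¹ 0) = _
          rw [show (Equiv.swap (0 : Fin 6) 1 * Equiv.swap (3 : Fin 6) 4)⁻¹ 0 = 1 from by decide]
        have k1 : τ⁻¹ 1 = τ'⁻¹ 0 := by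
          rw [hττ', mul_inv_rev]
          show τ'⁻¹ ((Equiv.swap (0 : Fin 6) 1 * Equiv.swap (3 : Fin 6) 4)⁻¹ 1) = _
          rw [show (Equiv.swap (0 : Fin 6) 1 * Equiv.swap (3 : Fin 6) 4)⁻¹ 1 = 0 from by decide]
        have hlt := hτ.2
        rw [k0, k1] at hlt
        exact absurd hτ'.2 (not_lt.mpr hlt.le)
    have hset : {w : Submodule ℂ (Fin 6 → ℂ) |
        ∃ σ ∈ Hsub, Submodule.map (permMap σ) (linePlane a b c p) = w}
        = (fun σ : Equiv.Perm (Fin 6) =>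
            Submodule.map (permMap σ) (linePlane a b c p)) '' ↑Trep := by
      ext w
      simp only [Set.mem_setOf_eq, Set.mem_image, Finset.mem_coe, Trep, Finset.mem_filter,
        Finset.mem_univ, true_and]
      constructor
      · rintro ⟨σ, hσH, rfl⟩
        have hP : Pprop σ := hsub_pprop hσH
        by_cases hlt : σ⁻¹ 0 < σ⁻¹ 1
        · exact ⟨σ, ⟨hP, hlt⟩, rfl⟩
        · refine ⟨(Equiv.swap (0 : Fin 6) 1 * Equiv.swap (3 : Fin 6) 4) * σ,
            ⟨Pprop.mul hsP hP, ?_⟩, ?_⟩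
          · have k0 : ((Equiv.swap (0 : Fin 6) 1 * Equiv.swap (3 : Fin 6) 4) * σ)⁻¹ 0
                = σ⁻¹ 1 := by
              rw [mul_inv_rev]
              show σ⁻¹ ((Equiv.swap (0 : Fin 6) 1 * Equiv.swap (3 : Fin 6) 4)⁻¹ 0) = _
              rw [show (Equiv.swap (0 : Fin 6) 1 * Equiv.swap (3 : Fin 6) 4)⁻¹ 0 = 1 from by decide]
            have k1 : ((Equiv.swap (0 : Fin 6) 1 * Equiv.swap (3 : Fin 6) 4) * σ)⁻¹ 1
                = σ⁻¹ 0 := by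
              rw [mul_inv_rev]
              show σ⁻¹ ((Equiv.swap (0 : Fin 6) 1 * Equiv.swap (3 : Fin 6) 4)⁻¹ 1) = _
              rw [show (Equiv.swap (0 : Fin 6) 1 * Equiv.swap (3 : Fin 6) 4)⁻¹ 1 = 0 from by decide]
            rw [k0, k1]
            have hne : σ⁻¹ 1 ≠ σ⁻¹ 0 := fun hh => by
              have := σ⁻¹.injective hh
              exact absurd this (by decide)
            exact lt_of_le_of_ne (not_lt.mp hlt) hne
          · show Submodule.map (permMap ((Equiv.swap (0 : Fin 6) 1 * Equiv.swap (3 : Fin 6) 4) * σ))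
                (linePlane a b c p) = Submodule.map (permMap σ) (linePlane a b c p)
            rw [← map_map_perm, hmaps]
      · rintro ⟨σ, ⟨hP, _⟩, rfl⟩
        exact ⟨σ, pprop_mem hP, rfl⟩
    rw [hset, Set.ncard_image_of_injOn hinj, Set.ncard_coe_finset, Trep_card]
  · intro σ hσ
    exact hstab σ (hsub_pprop hσ)
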